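/- Let 1 < p_min ≤ p_max < ∞ and c₁, c₂ > 0, and let γ = γ(n, p_min, p_max) ≥ 1 be sufficiently large (depending only on n, p_min, p_max). Fix x₀ ∈ ℝⁿ and 0 < r̄₁ < r̄₂ ≤ 1, and define w(x) = c₁|x−x₀|^{−γ} − c₂. Then if p : ℝⁿ → (1,∞) is C¹ with p_min ≤ p ≤ p_max and ‖∇p‖_∞ sufficiently small (depending on n, p_min, p_max, r̄₁, c₁), there exists c̄ > 0 (depending on p_min, p_max, c₁) such that Δ_{p(x)} w(x) ≥ c̄ for all x with r̄₁ ≤ |x−x₀| ≤ r̄₂. -/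

import Mathlib

open scoped RealInnerProductSpace

/-- The (non-divergence form) `p(x)`-Laplacian of `w` at `x` -/
noncomputable def pLap {n : ℕ} (p w : EuclideanSpace ℝ (Fin n) → ℝ)
    (x : EuclideanSpace ℝ (Fin n)) : ℝ :=
  ‖gradient w x‖ ^ (p x - 2) *
    (LinearMap.trace ℝ (EuclideanSpace ℝ (Fin n))
        ((fderiv ℝ (gradient w) x :
            EuclideanSpace ℝ (Fin n) →L[ℝ] EuclideanSpace ℝ (Fin n)) :
          EuclideanSpace ℝ (Fin n) →ₗ[ℝ] EuclideanSpace ℝ (Fin n)) +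
      (p x - 2) *
        ⟪fderiv ℝ (gradient w) x (‖gradient w x‖⁻¹ • gradient w x),
          ‖gradient w x‖⁻¹ • gradient w x⟫ +
      ⟪gradient p x, gradient w x⟫ * Real.log ‖gradient w x‖)

noncomputable section StmtAux

variable {n : ℕ}

/-- candidate gradient field of the barrier -/
def stmt5gc (x₀ : EuclideanSpace ℝ (Fin n)) (γ c₁ : ℝ) (y : EuclideanSpace ℝ (Fin n)) :
    EuclideanSpace ℝ (Fin n) :=
  (c₁ * (-γ/2) * (‖y - x₀‖ ^ 2) ^ (-γ/2 - 1) * 2) • (y - x₀)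

lemma stmt5_hasGradientAt (x₀ x : EuclideanSpace ℝ (Fin n)) (γ c₁ c₂ : ℝ) (hx : x ≠ x₀) :
    HasGradientAt (fun y => c₁ * ‖y - x₀‖ ^ (-γ) - c₂) (stmt5gc x₀ γ c₁ x) x := by
  have hu : x - x₀ ≠ 0 := sub_ne_zero.mpr hx
  have hq : HasFDerivAt (fun y : EuclideanSpace ℝ (Fin n) => ‖y - x₀‖ ^ 2)
      (2 • (innerSL ℝ (x - x₀)).comp (ContinuousLinearMap.id ℝ (EuclideanSpace ℝ (Fin n)))) x :=
    ((hasFDerivAt_id x).sub_const x₀).norm_sq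
  have hr : HasDerivAt (fun t : ℝ => t ^ (-γ/2)) ((-γ/2) * (‖x - x₀‖^2) ^ (-γ/2 - 1)) (‖x - x₀‖^2) :=
    Real.hasDerivAt_rpow_const (Or.inl (pow_ne_zero 2 (norm_ne_zero_iff.mpr hu)))
  have hcomp := hr.comp_hasFDerivAt x hq
  have hw : HasFDerivAt (fun y => c₁ * ‖y - x₀‖ ^ (-γ) - c₂)
      (c₁ • ((-γ/2 * (‖x - x₀‖^2) ^ (-γ/2 - 1)) •
        (2 • (innerSL ℝ (x - x₀)).comp (ContinuousLinearMap.id ℝ (EuclideanSpace ℝ (Fin n)))))) x := by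
    have : (fun y => c₁ * ‖y - x₀‖ ^ (-γ) - c₂)
        = fun y => c₁ * ((fun t : ℝ => t ^ (-γ/2)) ∘
            (fun y : EuclideanSpace ℝ (Fin n) => ‖y - x₀‖ ^ 2)) y - c₂ := by
      funext y
      simp only [Function.comp]
      rw [← Real.rpow_natCast ‖y - x₀‖ 2, ← Real.rpow_mul (norm_nonneg _)]
      norm_num
      left; congr 1; ring
    rw [this]
    exact ((hcomp.const_mul c₁).sub_const c₂)
  rw [hasGradientAt_iff_hasFDerivAt]
  refine hw.congr_fderiv (Eq.symm ?_)
  ext v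
  simp [stmt5gc, InnerProductSpace.toDual_apply_apply, real_inner_smul_left, two_smul]
  ring

lemma stmt5_hasFDerivAt_gc (x₀ x : EuclideanSpace ℝ (Fin n)) (γ c₁ : ℝ) (hx : x ≠ x₀) :
    HasFDerivAt (stmt5gc x₀ γ c₁)
      ((c₁ * (-γ/2) * (‖x - x₀‖ ^ 2) ^ (-γ/2 - 1) * 2) •
          ContinuousLinearMap.id ℝ (EuclideanSpace ℝ (Fin n))
        + ((c₁ * (-γ/2) * ((-γ/2 - 1) * (‖x - x₀‖ ^ 2) ^ (-γ/2 - 1 - 1)) * 2 * 2) •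
            innerSL ℝ (x - x₀)).smulRight (x - x₀)) x := by
  have hu : x - x₀ ≠ 0 := sub_ne_zero.mpr hx
  have hq : HasFDerivAt (fun y : EuclideanSpace ℝ (Fin n) => ‖y - x₀‖ ^ 2)
      (2 • (innerSL ℝ (x - x₀)).comp (ContinuousLinearMap.id ℝ (EuclideanSpace ℝ (Fin n)))) x :=
    ((hasFDerivAt_id x).sub_const x₀).norm_sq
  have hr : HasDerivAt (fun t : ℝ => t ^ (-γ/2 - 1))
      ((-γ/2 - 1) * (‖x - x₀‖^2) ^ (-γ/2 - 1 - 1)) (‖x - x₀‖^2) :=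
    Real.hasDerivAt_rpow_const (Or.inl (pow_ne_zero 2 (norm_ne_zero_iff.mpr hu)))
  have hφ := ((hr.comp_hasFDerivAt x hq).const_mul (c₁ * (-γ/2))).mul_const 2
  have hL := hφ.smul ((hasFDerivAt_id x).sub_const x₀)
  refine hL.congr_fderiv (Eq.symm ?_)
  refine ContinuousLinearMap.ext fun v => ?_
  show _ = _
  simp only [ContinuousLinearMap.add_apply, ContinuousLinearMap.smul_apply,
    ContinuousLinearMap.id_apply, ContinuousLinearMap.smulRight_apply,
    ContinuousLinearMap.coe_smul', Pi.smul_apply, innerSL_apply_apply,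
    ContinuousLinearMap.coe_comp', Function.comp_apply, id_eq, smul_smul, smul_eq_mul]
  simp only [nsmul_eq_mul]
  congr 2
  ring

lemma stmt5_trace_rank_one (b : ℝ) (u : EuclideanSpace ℝ (Fin n)) :
    LinearMap.trace ℝ (EuclideanSpace ℝ (Fin n))
      (((b • innerSL ℝ u).smulRight u :
          EuclideanSpace ℝ (Fin n) →L[ℝ] EuclideanSpace ℝ (Fin n)) :
        EuclideanSpace ℝ (Fin n) →ₗ[ℝ] EuclideanSpace ℝ (Fin n)) = b * ‖u‖ ^ 2 := by
  classical
  rw [LinearMap.trace_eq_matrix_trace ℝ (PiLp.basisFun 2 ℝ (Fin n)), Matrix.trace]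
  have h : ∀ i, (LinearMap.toMatrix (PiLp.basisFun 2 ℝ (Fin n)) (PiLp.basisFun 2 ℝ (Fin n))
      (((b • innerSL ℝ u).smulRight u :
          EuclideanSpace ℝ (Fin n) →L[ℝ] EuclideanSpace ℝ (Fin n)) :
        EuclideanSpace ℝ (Fin n) →ₗ[ℝ] EuclideanSpace ℝ (Fin n))).diag i
      = b * (u i * u i) := by
    intro i
    simp [Matrix.diag, LinearMap.toMatrix_apply, PiLp.basisFun_apply, PiLp.basisFun_repr,
      ContinuousLinearMap.smulRight_apply, real_inner_smul_left, PiLp.inner_apply,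
      RCLike.inner_apply, EuclideanSpace.inner_single_right]
    ring
  rw [Finset.sum_congr rfl (fun i _ => h i), ← Finset.mul_sum]
  congr 1
  rw [← real_inner_self_eq_norm_sq]
  simp [PiLp.inner_apply, RCLike.inner_apply]
  rw [EuclideanSpace.norm_sq_eq]
  simp [sq]

lemma stmt5_trace_id : LinearMap.trace ℝ (EuclideanSpace ℝ (Fin n))
    (((ContinuousLinearMap.id ℝ (EuclideanSpace ℝ (Fin n)) :
        EuclideanSpace ℝ (Fin n) →L[ℝ] EuclideanSpace ℝ (Fin n))) :
      EuclideanSpace ℝ (Fin n) →ₗ[ℝ] EuclideanSpace ℝ (Fin n)) = n := by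
  have : (((ContinuousLinearMap.id ℝ (EuclideanSpace ℝ (Fin n)) :
        EuclideanSpace ℝ (Fin n) →L[ℝ] EuclideanSpace ℝ (Fin n))) :
      EuclideanSpace ℝ (Fin n) →ₗ[ℝ] EuclideanSpace ℝ (Fin n)) = LinearMap.id := rfl
  rw [this, LinearMap.trace_id]
  simp

lemma stmt5_inner {n : ℕ} (a b : ℝ) (u : EuclideanSpace ℝ (Fin n)) (hu : u ≠ 0) (ha : a ≠ 0) :
    ⟪(a • ContinuousLinearMap.id ℝ (EuclideanSpace ℝ (Fin n))
        + (b • innerSL ℝ u).smulRight u) (‖(a • u : EuclideanSpace ℝ (Fin n))‖⁻¹ • (a • u)),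
      ‖(a • u : EuclideanSpace ℝ (Fin n))‖⁻¹ • (a • u)⟫ = a + b * ‖u‖ ^ 2 := by
  have hnu : ‖u‖ ≠ 0 := norm_ne_zero_iff.mpr hu
  have ht : ‖(a • u : EuclideanSpace ℝ (Fin n))‖ = |a| * ‖u‖ := by
    rw [norm_smul, Real.norm_eq_abs]
  have hab : |a| ≠ 0 := abs_ne_zero.mpr ha
  have hσ : (‖(a • u : EuclideanSpace ℝ (Fin n))‖⁻¹ * a) ^ 2 * ‖u‖ ^ 2 = 1 := by
    rw [ht]
    field_simp
    rw [sq_abs]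
  rw [smul_smul]
  simp only [ContinuousLinearMap.add_apply, ContinuousLinearMap.smul_apply,
    ContinuousLinearMap.id_apply, ContinuousLinearMap.smulRight_apply, innerSL_apply_apply,
    inner_add_left, real_inner_smul_left, real_inner_smul_right,
    real_inner_self_eq_norm_sq, smul_smul, smul_eq_mul]
  linear_combination (a + b * ‖u‖ ^ 2) * hσ

end StmtAux

set_option maxHeartbeats 1000000 in
/-- barrier lemma. Given `1 < p_min ≤ p_max`, there exists `γ ≥ 1`
(depending only on `n, p_min, p_max`) such that for each `c₁ > 0` there is a `c̄ > 0`
(depending on `p_min, p_max, c₁`), and for each `0 < r̄₁` there is `ε₀ > 0`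
(depending on `n, p_min, p_max, r̄₁, c₁`) such that for every `c₂`, `x₀`, `r̄₂` with
`r̄₁ < r̄₂ ≤ 1` and every `C¹` exponent `p` with `p_min ≤ p ≤ p_max` and `‖∇p‖_∞ ≤ ε₀`,
the barrier `w(x) = c₁|x−x₀|^{−γ} − c₂` satisfies `Δ_{p(x)}w ≥ c̄` on the annulus
`r̄₁ ≤ |x−x₀| ≤ r̄₂`. -/
theorem stmt5 {n : ℕ} (pmin pmax : ℝ) (h1 : 1 < pmin) (h2 : pmin ≤ pmax) :
    ∃ γ : ℝ, 1 ≤ γ ∧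
      ∀ c₁ : ℝ, 0 < c₁ → ∃ cbar > (0 : ℝ),
        ∀ r₁ : ℝ, 0 < r₁ → ∃ ε₀ > (0 : ℝ),
          ∀ (c₂ : ℝ) (x₀ : EuclideanSpace ℝ (Fin n)) (r₂ : ℝ), r₁ < r₂ → r₂ ≤ 1 →
            ∀ p : EuclideanSpace ℝ (Fin n) → ℝ, ContDiff ℝ 1 p →
              (∀ x, pmin ≤ p x ∧ p x ≤ pmax) →
              (∀ x, ‖gradient p x‖ ≤ ε₀) →
              ∀ x : EuclideanSpace ℝ (Fin n), r₁ ≤ ‖x - x₀‖ → ‖x - x₀‖ ≤ r₂ →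
                cbar ≤ pLap p (fun y => c₁ * ‖y - x₀‖ ^ (-γ) - c₂) x := by
  have hpm : 0 < pmin - 1 := by linarith
  obtain ⟨γ, hγdef⟩ : ∃ γ : ℝ, γ = 1 + 2 * (n + 2) / (pmin - 1) := ⟨_, rfl⟩
  have hγ1 : 1 ≤ γ := by
    rw [hγdef]
    have : 0 ≤ 2 * ((n : ℝ) + 2) / (pmin - 1) := by positivity
    linarith
  have hγpos : 0 < γ := by linarith
  have hγkey : γ * (pmin - 1) = (pmin - 1) + 2 * (n + 2) := by
    rw [hγdef]; field_simp
  refine ⟨γ, hγ1, ?_⟩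
  intro c₁ hc₁
  obtain ⟨A₀, hA₀def⟩ : ∃ A₀ : ℝ, A₀ = γ * (pmin - 1) / 2 := ⟨_, rfl⟩
  have hA₀pos : 0 < A₀ := by rw [hA₀def]; positivity
  obtain ⟨m, hmdef⟩ : ∃ m : ℝ, m = min ((γ * c₁) ^ (pmin - 2)) ((γ * c₁) ^ (pmax - 2)) := ⟨_, rfl⟩
  have hγc₁ : 0 < γ * c₁ := by positivity
  have hmpos : 0 < m := by
    rw [hmdef]
    exact lt_min (Real.rpow_pos_of_pos hγc₁ _) (Real.rpow_pos_of_pos hγc₁ _)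
  refine ⟨A₀ / 2 * (γ * c₁) * m, by positivity, ?_⟩
  intro r₁ hr₁
  obtain ⟨B, hBdef⟩ : ∃ B : ℝ, B = |Real.log (γ * c₁)| + (γ + 1) * |Real.log r₁| := ⟨_, rfl⟩
  have hBnn : 0 ≤ B := by rw [hBdef]; positivity
  refine ⟨A₀ / (2 * (B + 1)), by positivity, ?_⟩
  intro c₂ x₀ r₂ hr12 hr₂ p hp hpb hpg x hxr₁ hxr₂
  obtain ⟨r, hrdef⟩ : ∃ r : ℝ, r = ‖x - x₀‖ := ⟨_, rfl⟩
  rw [← hrdef] at hxr₁ hxr₂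
  have hrpos : 0 < r := lt_of_lt_of_le hr₁ hxr₁
  have hr1 : r ≤ 1 := le_trans hxr₂ hr₂
  have hx : x ≠ x₀ := by
    intro h
    rw [h, sub_self, norm_zero] at hrdef
    exact (ne_of_gt hrpos) hrdef
  have hu : x - x₀ ≠ 0 := sub_ne_zero.mpr hx
  set w : EuclideanSpace ℝ (Fin n) → ℝ := fun y => c₁ * ‖y - x₀‖ ^ (-γ) - c₂ with hwdef
  have hgradeq : gradient w =ᶠ[nhds x] stmt5gc x₀ γ c₁ := by
    filter_upwards [isOpen_compl_singleton.mem_nhds (by simpa using hx)] with y hy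
    exact (stmt5_hasGradientAt x₀ y γ c₁ c₂ (by simpa using hy)).gradient
  have hgradx : gradient w x = stmt5gc x₀ γ c₁ x :=
    (stmt5_hasGradientAt x₀ x γ c₁ c₂ hx).gradient
  obtain ⟨a, hadef⟩ : ∃ a : ℝ, a = c₁ * (-γ/2) * (‖x - x₀‖ ^ 2) ^ (-γ/2 - 1) * 2 := ⟨_, rfl⟩
  obtain ⟨b, hbdef⟩ : ∃ b : ℝ,
      b = c₁ * (-γ/2) * ((-γ/2 - 1) * (‖x - x₀‖ ^ 2) ^ (-γ/2 - 1 - 1)) * 2 * 2 := ⟨_, rfl⟩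
  have hfderiv : fderiv ℝ (gradient w) x
      = a • ContinuousLinearMap.id ℝ (EuclideanSpace ℝ (Fin n))
        + (b • innerSL ℝ (x - x₀)).smulRight (x - x₀) := by
    rw [hgradeq.fderiv_eq, (stmt5_hasFDerivAt_gc x₀ x γ c₁ hx).fderiv, ← hadef, ← hbdef]
  have hsq : ∀ s : ℝ, (r ^ 2 : ℝ) ^ s = r ^ (2 * s) := by
    intro s
    rw [← Real.rpow_natCast r 2, ← Real.rpow_mul (le_of_lt hrpos)]
    norm_num
  have ha : a = -γ * c₁ * r ^ (-γ - 2) := by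
    rw [hadef, ← hrdef, hsq, show 2 * (-γ/2 - 1) = -γ - 2 by ring]
    ring
  have hb : b = γ * (γ + 2) * c₁ * r ^ (-γ - 4) := by
    rw [hbdef, ← hrdef, hsq, show 2 * (-γ/2 - 1 - 1) = -γ - 4 by ring]
    ring
  have hgw : gradient w x = a • (x - x₀) := by rw [hgradx, hadef]; rfl
  have hrpow_pos : ∀ s : ℝ, 0 < r ^ s := fun s => Real.rpow_pos_of_pos hrpos s
  have haneg : a < 0 := by
    rw [ha]
    have hpos : 0 < γ * c₁ * r ^ (-γ - 2) := by positivity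
    linarith only [hpos]
  have hpow : r ^ (-γ - 2) * r = r ^ (-γ - 1) := by
    rw [← Real.rpow_add_one (ne_of_gt hrpos) (-γ - 2)]
    congr 1; ring
  have hpow2 : r ^ (-γ - 4) * r ^ 2 = r ^ (-γ - 2) := by
    rw [← Real.rpow_natCast r 2, ← Real.rpow_add hrpos]
    congr 1; ring
  have hAnorm : ‖gradient w x‖ = γ * c₁ * r ^ (-γ - 1) := by
    rw [hgw, norm_smul, Real.norm_eq_abs, abs_of_neg haneg, ha, ← hrdef, ← hpow]
    ring
  have htr : LinearMap.trace ℝ (EuclideanSpace ℝ (Fin n))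
      (((a • ContinuousLinearMap.id ℝ (EuclideanSpace ℝ (Fin n))
        + (b • innerSL ℝ (x - x₀)).smulRight (x - x₀)) :
          EuclideanSpace ℝ (Fin n) →L[ℝ] EuclideanSpace ℝ (Fin n)) :
        EuclideanSpace ℝ (Fin n) →ₗ[ℝ] EuclideanSpace ℝ (Fin n)) = (n : ℝ) * a + b * r ^ 2 := by
    simp only [ContinuousLinearMap.coe_add, ContinuousLinearMap.coe_smul, map_add, map_smul,
      stmt5_trace_rank_one, stmt5_trace_id, smul_eq_mul, ← hrdef]
    ring
  have hinner : ⟪(a • ContinuousLinearMap.id ℝ (EuclideanSpace ℝ (Fin n))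
        + (b • innerSL ℝ (x - x₀)).smulRight (x - x₀))
          (‖gradient w x‖⁻¹ • gradient w x), ‖gradient w x‖⁻¹ • gradient w x⟫
      = a + b * r ^ 2 := by
    rw [hgw, hrdef]
    exact stmt5_inner a b (x - x₀) hu (ne_of_lt haneg)
  have hplap : pLap p w x = (γ * c₁ * r ^ (-γ - 1)) ^ (p x - 2) *
      (((n : ℝ) * a + b * r ^ 2) + (p x - 2) * (a + b * r ^ 2) +
        ⟪gradient p x, gradient w x⟫ * Real.log (γ * c₁ * r ^ (-γ - 1))) := by
    rw [pLap, hfderiv, htr, hinner, hAnorm]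
  have hpx1 := (hpb x).1
  have hpx2 := (hpb x).2
  have hkey2 : A₀ ≤ γ * (p x - 1) + p x - n := by
    have h' : γ * (pmin - 1) ≤ γ * (p x - 1) :=
      mul_le_mul_of_nonneg_left (by linarith only [hpx1]) (le_of_lt hγpos)
    rw [hA₀def]
    linarith only [hγkey, h', hpx1, h1]
  have hb2 : b * r ^ 2 = γ * (γ + 2) * c₁ * r ^ (-γ - 2) := by
    rw [hb, show γ * (γ + 2) * c₁ * r ^ (-γ - 4) * r ^ 2
      = γ * (γ + 2) * c₁ * (r ^ (-γ - 4) * r ^ 2) by ring, hpow2]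
  have hmainid : ((n : ℝ) * a + b * r ^ 2) + (p x - 2) * (a + b * r ^ 2)
      = γ * c₁ * r ^ (-γ - 2) * (γ * (p x - 1) + p x - n) := by
    rw [hb2, ha]
    ring
  have hmain : γ * c₁ * r ^ (-γ - 2) * A₀
      ≤ ((n : ℝ) * a + b * r ^ 2) + (p x - 2) * (a + b * r ^ 2) := by
    rw [hmainid]
    have h0 : 0 ≤ γ * c₁ * r ^ (-γ - 2) := by positivity
    exact mul_le_mul_of_nonneg_left hkey2 h0
  have hEbound : |⟪gradient p x, gradient w x⟫ * Real.log (γ * c₁ * r ^ (-γ - 1))|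
      ≤ γ * c₁ * r ^ (-γ - 2) * (A₀ / 2) := by
    have hCS : |⟪gradient p x, gradient w x⟫| ≤ (A₀ / (2 * (B + 1))) * (γ * c₁ * r ^ (-γ - 1)) := by
      calc |⟪gradient p x, gradient w x⟫| ≤ ‖gradient p x‖ * ‖gradient w x‖ :=
            abs_real_inner_le_norm _ _
        _ ≤ (A₀ / (2 * (B + 1))) * (γ * c₁ * r ^ (-γ - 1)) := by
            rw [hAnorm]
            exact mul_le_mul_of_nonneg_right (hpg x) (by positivity)
    have hlog : |Real.log (γ * c₁ * r ^ (-γ - 1))| ≤ B := by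
      rw [Real.log_mul (ne_of_gt hγc₁) (ne_of_gt (hrpow_pos _)), Real.log_rpow hrpos]
      have h₁ : Real.log r ≤ 0 := Real.log_nonpos (le_of_lt hrpos) hr1
      have h₂ : Real.log r₁ ≤ Real.log r := Real.log_le_log hr₁ hxr₁
      have h₃ : -Real.log r₁ ≤ |Real.log r₁| := neg_le_abs _
      calc |Real.log (γ * c₁) + (-γ - 1) * Real.log r|
          ≤ |Real.log (γ * c₁)| + |(-γ - 1) * Real.log r| := abs_add_le _ _
        _ = |Real.log (γ * c₁)| + (γ + 1) * (-Real.log r) := by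
            rw [abs_mul, abs_of_neg (show -γ - 1 < 0 by linarith only [hγpos]), abs_of_nonpos h₁]
            ring
        _ ≤ B := by
            rw [hBdef]
            have h4 : (γ + 1) * (-Real.log r) ≤ (γ + 1) * |Real.log r₁| :=
              mul_le_mul_of_nonneg_left (by linarith only [h₂, h₃]) (by linarith only [hγpos])
            linarith only [h4]
    calc |⟪gradient p x, gradient w x⟫ * Real.log (γ * c₁ * r ^ (-γ - 1))|
        = |⟪gradient p x, gradient w x⟫| * |Real.log (γ * c₁ * r ^ (-γ - 1))| := abs_mul _ _
      _ ≤ ((A₀ / (2 * (B + 1))) * (γ * c₁ * r ^ (-γ - 1))) * B :=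
          mul_le_mul hCS hlog (abs_nonneg _) (by positivity)
      _ = ((A₀ / (2 * (B + 1))) * B) * (γ * c₁ * r ^ (-γ - 1)) := by ring
      _ ≤ (A₀ / 2) * (γ * c₁ * r ^ (-γ - 2)) := by
          have hrr : r ^ (-γ - 1) ≤ r ^ (-γ - 2) :=
            Real.rpow_le_rpow_of_exponent_ge hrpos hr1 (by linarith only [])
          have hBB : (A₀ / (2 * (B + 1))) * B ≤ A₀ / 2 := by
            rw [div_mul_eq_mul_div, div_le_div_iff₀ (by positivity) (by norm_num)]
            linarith only [hA₀pos]
          have h5 : 0 ≤ (A₀ / (2 * (B + 1))) * B := by positivity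
          have h6 : 0 ≤ γ * c₁ * r ^ (-γ - 1) := by positivity
          have h7 : γ * c₁ * r ^ (-γ - 1) ≤ γ * c₁ * r ^ (-γ - 2) := by
            exact mul_le_mul_of_nonneg_left hrr (le_of_lt hγc₁)
          exact mul_le_mul hBB h7 h6 (by positivity)
      _ = γ * c₁ * r ^ (-γ - 2) * (A₀ / 2) := by ring
  -- the bracket is bounded below
  have hbr : γ * c₁ * r ^ (-γ - 2) * (A₀ / 2)
      ≤ (((n : ℝ) * a + b * r ^ 2) + (p x - 2) * (a + b * r ^ 2) +
        ⟪gradient p x, gradient w x⟫ * Real.log (γ * c₁ * r ^ (-γ - 1))) := by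
    have hneg := neg_abs_le (⟪gradient p x, gradient w x⟫ * Real.log (γ * c₁ * r ^ (-γ - 1)))
    linarith only [hmain, hEbound, hneg]
  -- final assembly
  rw [hplap]
  have hNnn : (0:ℝ) ≤ (γ * c₁ * r ^ (-γ - 1)) ^ (p x - 2) := Real.rpow_nonneg (by positivity) _
  have step1 : (γ * c₁ * r ^ (-γ - 1)) ^ (p x - 2) * (γ * c₁ * r ^ (-γ - 2) * (A₀ / 2))
      ≤ (γ * c₁ * r ^ (-γ - 1)) ^ (p x - 2) *
        (((n : ℝ) * a + b * r ^ 2) + (p x - 2) * (a + b * r ^ 2) +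
          ⟪gradient p x, gradient w x⟫ * Real.log (γ * c₁ * r ^ (-γ - 1))) :=
    mul_le_mul_of_nonneg_left hbr hNnn
  refine le_trans ?_ step1
  -- rewrite the left side
  have hsplit : (γ * c₁ * r ^ (-γ - 1)) ^ (p x - 2) * (γ * c₁ * r ^ (-γ - 2) * (A₀ / 2))
      = (γ * c₁) ^ (p x - 2) * r ^ ((-γ - 1) * (p x - 2) + (-γ - 2)) * (γ * c₁ * (A₀ / 2)) := by
    rw [Real.mul_rpow (le_of_lt hγc₁) (le_of_lt (hrpow_pos _)),
      ← Real.rpow_mul (le_of_lt hrpos), Real.rpow_add hrpos]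
    ring
  rw [hsplit]
  have hm : m ≤ (γ * c₁) ^ (p x - 2) := by
    rcases le_or_gt 1 (γ * c₁) with hge | hlt
    · calc m ≤ (γ * c₁) ^ (pmin - 2) := by rw [hmdef]; exact min_le_left _ _
        _ ≤ (γ * c₁) ^ (p x - 2) :=
          Real.rpow_le_rpow_of_exponent_le hge (by linarith only [hpx1])
    · calc m ≤ (γ * c₁) ^ (pmax - 2) := by rw [hmdef]; exact min_le_right _ _
        _ ≤ (γ * c₁) ^ (p x - 2) :=
          Real.rpow_le_rpow_of_exponent_ge hγc₁ (le_of_lt hlt) (by linarith only [hpx2])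
  have hQ : (1:ℝ) ≤ r ^ ((-γ - 1) * (p x - 2) + (-γ - 2)) := by
    apply Real.one_le_rpow_of_pos_of_le_one_of_nonpos hrpos hr1
    have h9 : 0 ≤ (γ + 1) * (p x - 1) :=
      mul_nonneg (by linarith only [hγpos]) (by linarith only [hpx1, h1])
    nlinarith only [h9]
  calc A₀ / 2 * (γ * c₁) * m = m * 1 * (γ * c₁ * (A₀ / 2)) := by ring
    _ ≤ (γ * c₁) ^ (p x - 2) * r ^ ((-γ - 1) * (p x - 2) + (-γ - 2)) * (γ * c₁ * (A₀ / 2)) := by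
        have := mul_le_mul hm hQ (by norm_num) (le_trans (le_of_lt hmpos) hm)
        exact mul_le_mul_of_nonneg_right this (by positivity)
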